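/- Let (Ω, μ) be a probability space, X : Ω → ℝ a measurable function such that exp(γ·X) is integrable and X is integrable on A, where γ < 0 is a real number and A ⊆ Ω is a measurable set with μ(A) = α for some α ∈ (0, 1]. Then (1/α)·∫_A X dμ ≥ (1/γ)·log(∫_Ω exp(γ·X) dμ) + (1/γ)·log(1/α). In particular, applying this to the lower-tail event of probability α yields the bound CVaR_α(X) ≥ L_γ(X) + (1/γ)·log(1/α) relating the lower-tail conditional value-at-risk to the tilted loss. -/

import Mathlib

open MeasureTheory

/-- **Entropic lower bound for conditional averages (CVaR vs. tilted loss).** On a probability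
space `(Ω, μ)`, for `γ < 0`, a measurable `X` with `exp (γ·X)` integrable, and a measurable
set `A` of probability `α ∈ (0, 1]` on which `X` is integrable,
`(1/α)·∫_A X dμ ≥ (1/γ)·log (∫ exp (γ·X) dμ) + (1/γ)·log (1/α)`. -/
theorem cvar_ge_tilted_loss
    {Ω : Type*} [MeasurableSpace Ω] (μ : Measure Ω) [IsProbabilityMeasure μ]
    (X : Ω → ℝ) (hX : Measurable X)
    (γ : ℝ) (hγ : γ < 0)
    (hint : Integrable (fun ω => Real.exp (γ * X ω)) μ)
    (A : Set Ω) (hA : MeasurableSet A)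
    (α : ℝ) (hα0 : 0 < α) (hα1 : α ≤ 1)
    (hμA : μ A = ENNReal.ofReal α)
    (hXA : IntegrableOn X A μ) :
    (1 / γ) * Real.log (∫ ω, Real.exp (γ * X ω) ∂μ)
        + (1 / γ) * Real.log (1 / α)
      ≤ (1 / α) * ∫ ω in A, X ω ∂μ := by
  have hμA0 : μ A ≠ 0 := by
    rw [hμA]; simp [ENNReal.ofReal_eq_zero, not_le, hα0]
  have hμAtop : μ A ≠ ⊤ := by rw [hμA]; exact ENNReal.ofReal_ne_top
  have htoReal : (μ A).toReal = α := by rw [hμA, ENNReal.toReal_ofReal hα0.le]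
  -- Jensen's inequality on A
  have hjensen : Real.exp (⨍ ω in A, γ * X ω ∂μ) ≤ ⨍ ω in A, Real.exp (γ * X ω) ∂μ := by
    have := (convexOn_exp).map_set_average_le Real.continuousOn_exp isClosed_univ
      hμA0 hμAtop (Filter.Eventually.of_forall fun x => Set.mem_univ _)
      (hXA.const_mul γ) ?_
    · exact this
    · exact (hint.integrableOn : IntegrableOn (fun ω => Real.exp (γ * X ω)) A μ)
  rw [setAverage_eq, setAverage_eq, measureReal_def, htoReal, smul_eq_mul, smul_eq_mul] at hjensen
  have hIpos : 0 < ∫ ω, Real.exp (γ * X ω) ∂μ := integral_exp_pos hint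
  have hαinv : (0:ℝ) < α⁻¹ := inv_pos.mpr hα0
  have hle : α⁻¹ * ∫ ω in A, Real.exp (γ * X ω) ∂μ ≤ α⁻¹ * ∫ ω, Real.exp (γ * X ω) ∂μ := by
    refine mul_le_mul_of_nonneg_left ?_ hαinv.le
    exact setIntegral_le_integral hint (Filter.Eventually.of_forall fun x => (Real.exp_pos _).le)
  have key : Real.exp (α⁻¹ * ∫ ω in A, γ * X ω ∂μ) ≤ α⁻¹ * ∫ ω, Real.exp (γ * X ω) ∂μ :=
    hjensen.trans hle
  have hlog : α⁻¹ * ∫ ω in A, γ * X ω ∂μ ≤ Real.log (α⁻¹ * ∫ ω, Real.exp (γ * X ω) ∂μ) := by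
    have := Real.log_le_log (Real.exp_pos _) key
    rwa [Real.log_exp] at this
  rw [Real.log_mul (ne_of_gt hαinv) (ne_of_gt hIpos), integral_const_mul] at hlog
  -- hlog : α⁻¹ * (γ * ∫_A X) ≤ log α⁻¹ + log ∫ exp
  have hγne : γ ≠ 0 := ne_of_lt hγ
  have h2 := mul_le_mul_of_nonpos_left hlog (one_div_neg.mpr hγ).le
  rw [one_div α]
  calc (1/γ) * Real.log (∫ ω, Real.exp (γ * X ω) ∂μ) + (1/γ) * Real.log α⁻¹
      = (1/γ) * (Real.log α⁻¹ + Real.log (∫ ω, Real.exp (γ * X ω) ∂μ)) := by ring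
    _ ≤ (1/γ) * (α⁻¹ * (γ * ∫ ω in A, X ω ∂μ)) := h2
    _ = α⁻¹ * ∫ ω in A, X ω ∂μ := by field_simp
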